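/- Backwards compatibility of GeDTs: Let f be a decision-tree classifier with leaf classifiers f^A returning the class proportions of training samples in cell A, and let p(x,y) be the corresponding GeDT where each leaf v computes a class-factorised density p_v(x,y) = p_v(x)·p_v(y) with p_v(y) the maximum-likelihood categorical over classes of samples in A_v. Then for every x with p(x) > 0 and every class y, the conditional distribution satisfies p(y | x) = f(x)(y). -/

import Mathlib

/-- A Generative Decision Tree: a tree-shaped probabilistic circuit consisting only of sum
nodes (with weighted children) and leaves computing densities over `X × Y` with support in a
cell of the feature space. -/
inductive GeDT (X Y : Type) : Type
  | leaf (cell : Set X) (p : X → Y → ℝ) : GeDT X Y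
  | sum (children : List (ℝ × GeDT X Y)) : GeDT X Y

namespace GeDT

variable {X Y : Type}

/- The function computed by a GeDT node. -/
mutual
  def eval : GeDT X Y → X → Y → ℝ
    | .leaf _ p, x, y => p x y
    | .sum cs, x, y => evalList cs x y
  def evalList : List (ℝ × GeDT X Y) → X → Y → ℝ
    | [], _, _ => 0
    | c :: cs, x, y => c.1 * eval c.2 x y + evalList cs x y
end

/- The support of a GeDT. -/
mutual
  def supp : GeDT X Y → Set X
    | .leaf c _ => c
    | .sum cs => suppList cs
  def suppList : List (ℝ × GeDT X Y) → Set X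
    | [] => ∅
    | c :: cs => supp c.2 ∪ suppList cs
end

/- Well-formedness: nonnegative leaves supported in their cells, convex sum weights,
pairwise disjoint children supports (determinism of the underlying tree partition). -/
mutual
  def wf : GeDT X Y → Prop
    | .leaf c p => (∀ x y, 0 ≤ p x y) ∧ (∀ x y, x ∉ c → p x y = 0)
    | .sum cs => wfList cs ∧ (cs.map Prod.fst).sum = 1 ∧
        cs.Pairwise (fun a b => Disjoint (supp a.2) (supp b.2))
  def wfList : List (ℝ × GeDT X Y) → Prop
    | [] => True
    | c :: cs => (0 ≤ c.1 ∧ wf c.2) ∧ wfList cs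
end

/- The list of leaves of a GeDT, each together with the list of sum weights along the
root-to-leaf path: entries `(Λ, cell, p)`. -/
mutual
  def leafPaths : GeDT X Y → List (List ℝ × Set X × (X → Y → ℝ))
    | .leaf c p => [([], c, p)]
    | .sum cs => leafPathsList cs
  def leafPathsList : List (ℝ × GeDT X Y) → List (List ℝ × Set X × (X → Y → ℝ))
    | [] => []
    | c :: cs => (leafPaths c.2).map (fun q => (c.1 :: q.1, q.2)) ++ leafPathsList cs
end


/- Auxiliary lemmas -/

mutual
  theorem mem_supp_of_leafPaths {x : X} : ∀ (t : GeDT X Y) (q : List ℝ × Set X × (X → Y → ℝ)),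
      q ∈ t.leafPaths → x ∈ q.2.1 → x ∈ t.supp
    | .leaf c p, q, hq, hx => by
        rw [leafPaths] at hq
        simp only [List.mem_singleton] at hq
        subst hq
        simpa [supp] using hx
    | .sum cs, q, hq, hx => by
        rw [leafPaths] at hq
        rw [supp]
        exact mem_suppList_of_leafPathsList cs q hq hx
  theorem mem_suppList_of_leafPathsList {x : X} : ∀ (cs : List (ℝ × GeDT X Y))
      (q : List ℝ × Set X × (X → Y → ℝ)),
      q ∈ leafPathsList cs → x ∈ q.2.1 → x ∈ suppList cs
    | c :: cs, q, hq, hx => by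
        rw [leafPathsList] at hq
        rw [suppList]
        rcases List.mem_append.1 hq with h | h
        · obtain ⟨r, hr, rfl⟩ := List.mem_map.1 h
          exact Or.inl (mem_supp_of_leafPaths c.2 r hr hx)
        · exact Or.inr (mem_suppList_of_leafPathsList cs q h hx)
end

theorem not_mem_suppList {x : X} : ∀ (cs : List (ℝ × GeDT X Y)),
    (∀ c ∈ cs, x ∉ supp c.2) → x ∉ suppList cs
  | [], _ => by rw [suppList]; exact Set.notMem_empty x
  | c :: cs, h => by
      rw [suppList]
      intro hmem
      rcases hmem with hmem | hmem
      · exact h c List.mem_cons_self hmem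
      · exact not_mem_suppList cs (fun b hb => h b (List.mem_cons_of_mem _ hb)) hmem

mutual
  theorem eval_of_not_mem_supp {x : X} {y : Y} : ∀ (t : GeDT X Y), t.wf → x ∉ t.supp →
      t.eval x y = 0
    | .leaf c p, hw, hx => by
        rw [supp] at hx
        rw [eval]
        exact hw.2 x y hx
    | .sum cs, hw, hx => by
        rw [supp] at hx
        rw [eval]
        exact evalList_of_not_mem_suppList cs hw.1 hx
  theorem evalList_of_not_mem_suppList {x : X} {y : Y} : ∀ (cs : List (ℝ × GeDT X Y)),
      wfList cs → x ∉ suppList cs → evalList cs x y = 0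
    | [], _, _ => by rw [evalList]
    | c :: cs, hw, hx => by
        rw [suppList] at hx
        rw [evalList]
        have h1 : x ∉ supp c.2 := fun h => hx (Or.inl h)
        have h2 : x ∉ suppList cs := fun h => hx (Or.inr h)
        rw [eval_of_not_mem_supp c.2 hw.1.2 h1, evalList_of_not_mem_suppList cs hw.2 h2]
        ring
end

mutual
  theorem eval_eq_path {x : X} {y : Y} : ∀ (t : GeDT X Y), t.wf →
      ∀ (q : List ℝ × Set X × (X → Y → ℝ)), q ∈ t.leafPaths → x ∈ q.2.1 →
      t.eval x y = q.1.prod * q.2.2 x y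
    | .leaf c p, hw, q, hq, hx => by
        rw [leafPaths] at hq
        simp only [List.mem_singleton] at hq
        subst hq
        rw [eval]
        simp
    | .sum cs, hw, q, hq, hx => by
        rw [leafPaths] at hq
        rw [eval]
        exact evalList_eq_path cs hw.1 hw.2.2 q hq hx
  theorem evalList_eq_path {x : X} {y : Y} : ∀ (cs : List (ℝ × GeDT X Y)),
      wfList cs → cs.Pairwise (fun a b => Disjoint (supp a.2) (supp b.2)) →
      ∀ (q : List ℝ × Set X × (X → Y → ℝ)), q ∈ leafPathsList cs → x ∈ q.2.1 →
      evalList cs x y = q.1.prod * q.2.2 x y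
    | c :: cs, hw, hd, q, hq, hx => by
        rw [leafPathsList] at hq
        rw [evalList]
        rw [List.pairwise_cons] at hd
        rcases List.mem_append.1 hq with h | h
        · obtain ⟨r, hr, rfl⟩ := List.mem_map.1 h
          have hsup : x ∈ supp c.2 := mem_supp_of_leafPaths c.2 r hr hx
          have hnot : x ∉ suppList cs := by
            apply not_mem_suppList
            intro b hb
            exact Set.disjoint_left.1 (hd.1 b hb) hsup
          rw [evalList_of_not_mem_suppList cs hw.2 hnot,
            eval_eq_path c.2 hw.1.2 r hr hx]
          simp [List.prod_cons]
          ring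
        · have hsup : x ∈ suppList cs := mem_suppList_of_leafPathsList cs q h hx
          have hnot : x ∉ supp c.2 := by
            intro hmem
            -- x in supp c.2 and in suppList cs: contradiction via disjointness
            have : ∀ b ∈ cs, x ∉ supp b.2 := fun b hb =>
              Set.disjoint_left.1 (hd.1 b hb) hmem
            exact not_mem_suppList cs this hsup
          rw [eval_of_not_mem_supp c.2 hw.1.2 hnot,
            evalList_eq_path cs hw.2 hd.2 q h hx]
          ring
end

/-- backwards compatibility of GeDTs. Let `t` be a well-formed GeDT whose leaf
containing `x` is class-factorised, `p_v(x, y) = px x * py y`, with `py` the (maximum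
likelihood, i.e. class-proportion) categorical distribution over classes, `∑ y, py y = 1`.
The decision-tree classifier returns `f(x) = py`, the class proportions of the leaf cell
containing `x`. Then for every `x` with `p(x) > 0` and every class `y`, the GeDT conditional
equals the DT classifier: `p(y | x) = f(x)(y)`. -/
theorem gedt_conditional_eq_dt_classifier [Fintype Y]
    (t : GeDT X Y) (ht : t.wf) (x : X)
    (hx : 0 < ∑ y, t.eval x y)
    (q : List ℝ × Set X × (X → Y → ℝ)) (hq : q ∈ t.leafPaths) (hxq : x ∈ q.2.1)
    (px : X → ℝ) (py : Y → ℝ)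
    (hfact : ∀ x' y, q.2.2 x' y = px x' * py y)
    (hpy0 : ∀ y, 0 ≤ py y) (hpynorm : ∑ y, py y = 1) :
    ∀ y, t.eval x y / (∑ y', t.eval x y') = py y := by
  intro y
  have heval : ∀ y', t.eval x y' = (q.1.prod * px x) * py y' := by
    intro y'
    rw [eval_eq_path t ht q hq hxq, hfact]
    ring
  have hsum : (∑ y', t.eval x y') = q.1.prod * px x := by
    simp only [heval, ← Finset.mul_sum, hpynorm, mul_one]
  have hne : q.1.prod * px x ≠ 0 := by
    intro h0
    rw [hsum, h0] at hx
    exact lt_irrefl 0 hx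
  rw [heval, hsum]
  exact mul_div_cancel_left₀ _ hne

end GeDT
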